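/- Let C be a category with all limits and finite colimits, such that cofiltered limits commute with finite colimits in C, let X be a profinite space and x ∈ X. Then cosheafification preserves costalks: for every precosheaf A ∈ PCoSh(X,C), the canonical map (A^cosh)_x → A_x is an isomorphism, where the costalk at x of a precosheaf B is B_x = lim over clopen V ∋ x of B(V). -/

import Mathlib

open CategoryTheory CategoryTheory.Limits TopologicalSpace

attribute [local instance] CategoryTheory.ConcreteCategory.instFunLike

universe w' w v u v₂ u₂ v₁ u₁

namespace ProfiniteCosheaves

variable {C : Type u₂} [Category.{v₂} C]

/-- The canonical binary cofan `A(U) → A(U ⊔ V) ← A(V)` of a precosheaf `A` at a pair of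
clopen subsets. -/
def cosheafCofan {X : Type*} [TopologicalSpace X] (A : Clopens X ⥤ C) (U V : Clopens X) :
    BinaryCofan (A.obj U) (A.obj V) :=
  BinaryCofan.mk (A.map (homOfLE le_sup_left : U ⟶ U ⊔ V)) (A.map (homOfLE le_sup_right))

/-- A precosheaf (a functor on the poset of clopen subsets) is a cosheaf if its value at `∅`
is initial and, for disjoint clopens `U, V`, the canonical cofan exhibits `A(U ⊔ V)` as the
coproduct `A(U) ⨿ A(V)`. -/
structure IsCosheaf {X : Type*} [TopologicalSpace X] (A : Clopens X ⥤ C) : Prop where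
  initial : Nonempty (IsInitial (A.obj ⊥))
  binary : ∀ U V : Clopens X, Disjoint U V → Nonempty (IsColimit (cosheafCofan A U V))

/-- The category `CoSh(X, C)` of cosheaves over a profinite space `X` valued in `C`. -/
def CoSheaf (X : Profinite.{u}) (C : Type u₂) [Category.{v₂} C] :=
  ObjectProperty.FullSubcategory (fun A : Clopens X ⥤ C => IsCosheaf A)

instance (X : Profinite.{u}) : Category (CoSheaf X C) := ObjectProperty.FullSubcategory.category _

/-- Preimage of clopen subsets along a continuous map, as a functor. -/
def clopensComap {X Y : Profinite.{u}} (f : X ⟶ Y) : Clopens Y ⥤ Clopens X where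
  obj U := ⟨f ⁻¹' (U : Set Y), U.isClopen.preimage f.hom.hom.continuous⟩
  map {U V} h := homOfLE (fun x hx => leOfHom h hx)

theorem IsCosheaf.comap {X Y : Profinite.{u}} (f : X ⟶ Y) {A : Clopens X ⥤ C}
    (hA : IsCosheaf A) : IsCosheaf (clopensComap f ⋙ A) := by
  constructor
  · have e : (clopensComap f).obj ⊥ = ⊥ := by
      apply SetLike.ext'
      simp [clopensComap]
    exact ⟨hA.initial.some.ofIso (A.mapIso (eqToIso e.symm))⟩
  · intro U V hUV
    have hUV' : Disjoint ((clopensComap f).obj U) ((clopensComap f).obj V) := by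
      rw [disjoint_iff] at hUV ⊢
      have h0 : (U : Set (Y : Type u)) ∩ (V : Set (Y : Type u)) = ∅ := by
        have := congrArg (fun W : Clopens (Y : Type u) => (W : Set (Y : Type u))) hUV
        simpa using this
      apply SetLike.ext'
      exact Set.preimage_inter.symm.trans ((congrArg _ h0).trans Set.preimage_empty)
    obtain ⟨h⟩ := hA.binary _ _ hUV'
    have e : (clopensComap f).obj U ⊔ (clopensComap f).obj V = (clopensComap f).obj (U ⊔ V) := by
      apply SetLike.ext'
      exact Set.preimage_union.symm
    refine ⟨h.ofIsoColimit (Cocones.ext (A.mapIso (eqToIso e)) ?_)⟩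
    rintro ⟨⟨⟩⟩ <;>
      · dsimp [cosheafCofan]
        exact (A.map_comp _ _).symm

/-- The direct image functor `f_* : CoSh(X, C) ⥤ CoSh(Y, C)`, `A ↦ A ∘ f⁻¹`. -/
def coshMapFun {X Y : Profinite.{u}} (f : X ⟶ Y) : CoSheaf X C ⥤ CoSheaf Y C :=
  ObjectProperty.lift _
    (ObjectProperty.ι _ ⋙ (Functor.whiskeringLeft (Clopens Y) (Clopens X) C).obj (clopensComap f))
    (fun A => A.property.comap f)

/-- The functor `Profinite ⥤ Cat` sending `X` to the category of cosheaves on `X` valued in `C`,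
and a continuous map to the direct image functor. -/
def coshFunctor (C : Type u₂) [Category.{v₂} C] : Profinite.{u} ⥤ Cat where
  obj X := Cat.of (CoSheaf X C)
  map f := (coshMapFun f).toCatHom
  map_id _ := rfl
  map_comp _ _ := rfl

/-- The total category `CoSh(C)` of profinite cosheaves valued in `C`, i.e. the Grothendieck
construction of `X ↦ CoSh(X, C)`. Objects are pairs `(X, A)` with `A` a cosheaf on `X`;
a morphism `(X, A) ⟶ (Y, B)` is a pair `(f, φ)` with `f : X ⟶ Y` continuous and
`φ : A ∘ f⁻¹ ⟶ B`. -/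
def CoSh (C : Type u₂) [Category.{v₂} C] :=
  Grothendieck (coshFunctor.{u} C)

instance : Category (CoSh.{u} C) := inferInstanceAs (Category (Grothendieck _))

/-- The global cosections functor `CoSh(C) ⥤ C`, `(A, X) ↦ A(X)`. -/
def globalCosections (C : Type u₂) [Category.{v₂} C] : CoSh.{u} C ⥤ C where
  obj P := (ObjectProperty.FullSubcategory.obj P.fiber).obj ⊤
  map {P Q} g :=
    (ObjectProperty.FullSubcategory.obj P.fiber).map (homOfLE (fun x _ => Set.mem_univ _) : (⊤ : Clopens P.base) ⟶ _) ≫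
      NatTrans.app (InducedCategory.Hom.hom g.fiber) ⊤
  map_id := by
    intro P
    erw [CategoryTheory.Functor.map_id, Category.id_comp, Grothendieck.id_fiber, eqToHom_refl]
    rfl
  map_comp := by
    intro P Q R f g
    erw [CategoryTheory.Functor.map_id, Category.id_comp, Category.id_comp]
    erw [CategoryTheory.Functor.map_id, Category.id_comp]
    erw [Grothendieck.comp_fiber, eqToHom_refl, Category.id_comp]
    rfl

/-- The poset of clopen neighbourhoods of a point, as a category. -/
def Nbhds (X : Profinite.{u}) (x : X) := ObjectProperty.FullSubcategory (fun U : Clopens X => x ∈ U)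

instance (X : Profinite.{u}) (x : X) : Category (Nbhds X x) := ObjectProperty.FullSubcategory.category _

/-- The diagram of values of `A` on the clopen neighbourhoods of `x`; the costalk of `A` at `x`
is its (inverse) limit. -/
def costalkDiagram {X : Profinite.{u}} (A : Clopens X ⥤ C) (x : X) : Nbhds X x ⥤ C :=
  ObjectProperty.ι _ ⋙ A

/-- The costalk `A_x = lim_{V ∋ x} A(V)` of a precosheaf at a point. -/
noncomputable def costalk {X : Profinite.{u}} (A : Clopens X ⥤ C) (x : X)
    [HasLimit (costalkDiagram A x)] : C :=
  limit (costalkDiagram A x)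

/-- `c` is *a* costalk of `A` at `x` if the costalk diagram of `A` at `x` admits a limit cone
whose point is isomorphic to `c`. -/
def IsCostalk {X : Profinite.{u}} (A : Clopens X ⥤ C) (x : X) (c : C) : Prop :=
  ∃ t : Cone (costalkDiagram A x), Nonempty (IsLimit t) ∧ Nonempty (t.pt ≅ c)

/-- The pro-completion of a category: the free completion under cofiltered limits, realised
concretely as the opposite of the category of left-exact functors to `Type`. -/
def ProCompletion (E : Type u₁) [Category.{v₁} E] :=
  (ObjectProperty.FullSubcategory fun F : E ⥤ Type v₁ => Nonempty (PreservesFiniteLimits F))ᵒᵖ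

instance (E : Type u₁) [Category.{v₁} E] : Category (ProCompletion E) :=
  inferInstanceAs (Category (ObjectProperty.FullSubcategory _)ᵒᵖ)

/-- The canonical (co-Yoneda) embedding of a category into its pro-completion. -/
def proEmbedding (E : Type u₁) [Category.{v₁} E] : E ⥤ ProCompletion E where
  obj e := Opposite.op ⟨coyoneda.obj (Opposite.op e), ⟨inferInstance⟩⟩
  map {e e'} f := Quiver.Hom.op
    (show (⟨coyoneda.obj (Opposite.op e'), ⟨inferInstance⟩⟩ : ObjectProperty.FullSubcategory _) ⟶
        ⟨coyoneda.obj (Opposite.op e), ⟨inferInstance⟩⟩ from ObjectProperty.homMk (coyoneda.map f.op))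

/-- A regular category: it has finite limits, coequalisers of kernel pairs, and regular
epimorphisms are stable under pullback. -/
class IsRegularCategory (C : Type u₂) [Category.{v₂} C] : Prop where
  hasFiniteLimits : HasFiniteLimits C
  hasCoeqOfKernelPairs : ∀ {R X Y : C} (f : X ⟶ Y) (a b : R ⟶ X),
    IsPullback a b f f → HasCoequalizer a b
  regularEpi_stable : ∀ {P X Y Z : C} (f : X ⟶ Z) (g : Y ⟶ Z) (p₁ : P ⟶ X) (p₂ : P ⟶ Y),
    IsPullback p₁ p₂ f g → Nonempty (RegularEpi f) → Nonempty (RegularEpi p₂)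

/-- `D` is closed under subobjects in its pro-completion: any subobject (in `Pro(D)`) of an
object of `D` is isomorphic to an object of `D`. -/
def ClosedUnderSubobjects (D : Type u) [SmallCategory D] : Prop :=
  ∀ (d : D) (c : ProCompletion D) (m : c ⟶ (proEmbedding D).obj d), Mono m →
    ∃ d' : D, Nonempty (c ≅ (proEmbedding D).obj d')

/-- The coprojection maps into binary coproducts are monomorphisms. -/
def MonoCoprojections (C : Type u₂) [Category.{v₂} C] : Prop :=
  ∀ (a b p : C) (inl : a ⟶ p) (inr : b ⟶ p),
    Nonempty (IsColimit (BinaryCofan.mk inl inr)) → Mono inl ∧ Mono inr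

/-- Cofiltered limits commute with finite colimits in `C`: for every finite category `J`,
the colimit functor `(J ⥤ C) ⥤ C` preserves cofiltered limits (of shapes of size `w`). -/
def CofilteredLimitsCommuteWithFiniteColimits (C : Type u₂) [Category.{v₂} C]
    [HasFiniteColimits C] : Prop :=
  ∀ (J : Type) [SmallCategory J] [FinCategory J] (K : Type w) [SmallCategory K] [IsCofiltered K],
    PreservesLimitsOfShape K (colim (J := J) (C := C))

/-- The full subcategory of "finite objects" of `CoSh(Pro(D))`: cosheaves `(A, X)` with `X`
finite such that every costalk of `A` lies in (the image of) `D`. -/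
def CoShFinProp (D : Type u) [SmallCategory D] (P : CoSh.{u} (ProCompletion D)) : Prop :=
  Finite (P.base : Type u) ∧
    ∀ x : P.base, ∃ d : D, IsCostalk (ObjectProperty.FullSubcategory.obj P.fiber) x ((proEmbedding D).obj d)

/-- The category `CoSh(Pro(D))_fin` of finite cosheaf objects. -/
def CoShFin (D : Type u) [SmallCategory D] := ObjectProperty.FullSubcategory (CoShFinProp D)

instance (D : Type u) [SmallCategory D] : Category (CoShFin D) := ObjectProperty.FullSubcategory.category _

end ProfiniteCosheaves

namespace ProfiniteCosheaves

variable {C : Type u₂} [Category.{v₂} C]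

/-- The map of costalks induced by a morphism of precosheaves. -/
noncomputable def costalkMap {X : Profinite.{u}} {A B : Clopens X ⥤ C} (η : A ⟶ B) (x : X)
    [HasLimit (costalkDiagram A x)] [HasLimit (costalkDiagram B x)] :
    costalk A x ⟶ costalk B x :=
  limMap (show costalkDiagram A x ⟶ costalkDiagram B x from
    Functor.whiskerLeft (ObjectProperty.ι fun U : Clopens X => x ∈ U) η)

section SkyAux

attribute [local instance] Classical.propDecidable

theorem bot_hom_ext [HasInitial C] {D Z : C} (h : D = ⊥_ C) (f g : D ⟶ Z) : f = g := by
  subst h; exact initial.hom_ext f g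

theorem eqToHom_chain3 {a b c e : C} (p : a = b) (q : b = c) (r : c = a) (f : a ⟶ e) :
    eqToHom p ≫ eqToHom q ≫ eqToHom r ≫ f = f := by
  subst p q; simp

theorem eqToHom_chain3' {a b a' c e : C} (p : a = b) (q : b = a') (r : a' = c) (s : a = c)
    (f : c ⟶ e) : eqToHom p ≫ eqToHom q ≫ eqToHom r ≫ f = eqToHom s ≫ f := by
  subst p q r; simp

theorem eqToHom_nat_aux {a b a' c d d' e : C} (p : a = b) (q : b = a') (r : a' = c) (s : a = c)
    (h : c ⟶ d) (k : d ⟶ d') (l : d' ⟶ e) :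
    (eqToHom p ≫ eqToHom q) ≫ eqToHom r ≫ h ≫ k ≫ l = eqToHom s ≫ (h ≫ k) ≫ l := by
  subst p q r; simp

theorem eqToHom_chain2 {a b e : C} (p : a = b) (q : b = a) (f : a ⟶ e) :
    eqToHom p ≫ eqToHom q ≫ f = f := by
  subst p; simp

variable {X : Profinite.{u}}

/-- The skyscraper precosheaf at `x` with value `c`. -/
noncomputable def sky [HasInitial C] (x : X) (c : C) : Clopens X ⥤ C where
  obj U := if x ∈ U then c else ⊥_ C
  map {U V} f :=
    if hU : x ∈ U then eqToHom (if_pos hU) ≫ eqToHom (if_pos (leOfHom f hU)).symm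
    else eqToHom (if_neg hU) ≫ initial.to _
  map_id U := by
    by_cases hU : x ∈ U
    · simp [dif_pos hU]
    · exact bot_hom_ext (if_neg hU) _ _
  map_comp {U V W} f g := by
    by_cases hU : x ∈ U
    · rw [dif_pos hU, dif_pos hU, dif_pos (show x ∈ V from leOfHom f hU)]; simp
    · exact bot_hom_ext (if_neg hU) _ _

theorem sky_map_pos [HasInitial C] {x : X} {c : C} {U V : Clopens X} (f : U ⟶ V) (hU : x ∈ U) :
    (sky x c).map f = eqToHom (if_pos hU) ≫ eqToHom (if_pos (leOfHom f hU)).symm :=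
  dif_pos hU

theorem sky_isCosheaf [HasInitial C] (x : X) (c : C) : IsCosheaf (sky x c) := by
  constructor
  · have hb : x ∉ (⊥ : Clopens X) := fun h => h
    exact ⟨initialIsInitial.ofIso (eqToIso ((if_neg hb).symm :
      (⊥_ C : C) = (sky x c).obj ⊥))⟩
  · intro U V hUV
    by_cases hU : x ∈ U
    · have hV : x ∉ V := fun hV =>
        (disjoint_iff.mp hUV ▸ (⟨hU, hV⟩ : x ∈ U ⊓ V) : x ∈ (⊥ : Clopens X))
      have hS : x ∈ U ⊔ V := (le_sup_left : U ≤ U ⊔ V) hU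
      refine ⟨BinaryCofan.IsColimit.mk _
        (fun {T} f g => eqToHom (if_pos hS) ≫ eqToHom (if_pos hU).symm ≫ f) ?_ ?_ ?_⟩
      · intro T f g
        show (sky x c).map (homOfLE le_sup_left) ≫ _ = _
        rw [sky_map_pos _ hU]; simp; exact eqToHom_chain3 _ _ _ _
      · intro T f g
        exact bot_hom_ext (if_neg hV) _ _
      · intro T f g m h₁ h₂
        rw [← h₁]
        show m = _ ≫ _ ≫ (sky x c).map (homOfLE le_sup_left) ≫ m
        rw [sky_map_pos _ hU]; simp; exact (eqToHom_chain3 _ _ _ _).symm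
    · by_cases hV : x ∈ V
      · have hS : x ∈ U ⊔ V := (le_sup_right : V ≤ U ⊔ V) hV
        refine ⟨BinaryCofan.IsColimit.mk _
          (fun {T} f g => eqToHom (if_pos hS) ≫ eqToHom (if_pos hV).symm ≫ g) ?_ ?_ ?_⟩
        · intro T f g
          exact bot_hom_ext (if_neg hU) _ _
        · intro T f g
          show (sky x c).map (homOfLE le_sup_right) ≫ _ = _
          rw [sky_map_pos _ hV]; simp; exact eqToHom_chain3 _ _ _ _
        · intro T f g m h₁ h₂
          rw [← h₂]
          show m = _ ≫ _ ≫ (sky x c).map (homOfLE le_sup_right) ≫ m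
          rw [sky_map_pos _ hV]; simp; exact (eqToHom_chain3 _ _ _ _).symm
      · have hS : x ∉ U ⊔ V := fun h => (h : x ∈ (U : Set X) ∪ V).elim hU hV
        refine ⟨BinaryCofan.IsColimit.mk _
          (fun {T} f g => eqToHom (if_neg hS) ≫ initial.to T) ?_ ?_ ?_⟩
        · intro T f g
          exact bot_hom_ext (if_neg hU) _ _
        · intro T f g
          exact bot_hom_ext (if_neg hV) _ _
        · intro T f g m h₁ h₂
          exact bot_hom_ext (if_neg hS) _ _

/-- The natural transformation from the skyscraper induced by a map to the costalk. -/
noncomputable def skyHom [HasInitial C] {x : X} {c : C} (B : Clopens X ⥤ C)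
    [HasLimit (costalkDiagram B x)] (h : c ⟶ limit (costalkDiagram B x)) : sky x c ⟶ B where
  app U :=
    if hU : x ∈ U then
      eqToHom (if_pos hU) ≫ h ≫ limit.π (costalkDiagram B x) ⟨U, hU⟩
    else eqToHom (if_neg hU) ≫ initial.to _
  naturality U V f := by
    by_cases hU : x ∈ U
    · have hV : x ∈ V := leOfHom f hU
      rw [sky_map_pos f hU, dif_pos hU, dif_pos hV]
      have w := limit.w (costalkDiagram B x)
        (show (⟨U, hU⟩ : Nbhds X x) ⟶ ⟨V, leOfHom f hU⟩ from ObjectProperty.homMk f)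
      simp only [Category.assoc, eqToHom_trans_assoc, eqToHom_refl, Category.id_comp]
      rw [← w]; exact eqToHom_nat_aux _ _ _ _ _ _ _
    · exact bot_hom_ext (if_neg hU) _ _

/-- The cone on the costalk diagram induced by a map from the skyscraper. -/
noncomputable def costalkCone [HasInitial C] {x : X} {c : C} (B : Clopens X ⥤ C)
    (ψ : sky x c ⟶ B) : Cone (costalkDiagram B x) where
  pt := c
  π :=
    { app := fun U => eqToHom (if_pos U.property).symm ≫ ψ.app U.obj
      naturality := fun U V f => by
        dsimp [costalkDiagram, ObjectProperty.ι]
        change 𝟙 c ≫ eqToHom _ ≫ ψ.app V.obj = (eqToHom _ ≫ ψ.app U.obj) ≫ B.map f.hom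
        rw [Category.id_comp, Category.assoc, ← ψ.naturality f.hom,
          sky_map_pos (show U.obj ⟶ V.obj from f.hom) U.property]
        simp
        exact (eqToHom_trans_assoc (C := C) _ _ _).symm }

/-- The map to the costalk induced by a map from the skyscraper. -/
noncomputable def costalkLift [HasInitial C] {x : X} {c : C} (B : Clopens X ⥤ C)
    [HasLimit (costalkDiagram B x)] (ψ : sky x c ⟶ B) : c ⟶ limit (costalkDiagram B x) :=
  limit.lift _ (costalkCone B ψ)

theorem costalkLift_skyHom [HasInitial C] {x : X} {c : C} (B : Clopens X ⥤ C)
    [HasLimit (costalkDiagram B x)] (h : c ⟶ limit (costalkDiagram B x)) :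
    costalkLift B (skyHom B h) = h := by
  apply limit.hom_ext
  intro U
  simp [costalkLift, costalkCone, skyHom, dif_pos U.property]
  exact eqToHom_chain2 _ _ _

theorem skyHom_costalkLift [HasInitial C] {x : X} {c : C} (B : Clopens X ⥤ C)
    [HasLimit (costalkDiagram B x)] (ψ : sky x c ⟶ B) :
    skyHom B (costalkLift B ψ) = ψ := by
  ext U
  by_cases hU : x ∈ U
  · simp [skyHom, dif_pos hU, costalkLift, costalkCone]
    erw [limit.lift_π]
    exact eqToHom_chain2 _ _ _
  · exact bot_hom_ext (if_neg hU) _ _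

theorem skyHom_comp [HasInitial C] {x : X} {c : C} {B B' : Clopens X ⥤ C}
    [HasLimit (costalkDiagram B x)] [HasLimit (costalkDiagram B' x)]
    (h : c ⟶ limit (costalkDiagram B x)) (η : B ⟶ B') :
    skyHom B h ≫ η = skyHom B' (h ≫ costalkMap η x) := by
  ext U
  by_cases hU : x ∈ U
  · simp [skyHom, dif_pos hU, costalkMap]
    erw [Category.assoc h (limMap _), limMap_π, ← Category.assoc h]
    rfl
  · exact bot_hom_ext (if_neg hU) _ _

theorem costalkLift_comp [HasInitial C] {x : X} {c : C} {B B' : Clopens X ⥤ C}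
    [HasLimit (costalkDiagram B x)] [HasLimit (costalkDiagram B' x)]
    (ψ : sky x c ⟶ B) (η : B ⟶ B') :
    costalkLift B ψ ≫ costalkMap η x = costalkLift B' (ψ ≫ η) := by
  conv_rhs => rw [← skyHom_costalkLift B ψ, skyHom_comp, costalkLift_skyHom]
  rfl

end SkyAux

/-- **Statement 14.** If `C` has all limits and finite colimits, and cofiltered limits commute
with finite colimits in `C`, then cosheafification preserves costalks: for any right adjoint
`R` of the inclusion of cosheaves into precosheaves, any precosheaf `A`, and any `x ∈ X`, the
canonical map `(A^cosh)_x ⟶ A_x` induced by the counit is an isomorphism. -/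
theorem cosheafification_preserves_costalks (C : Type u₂) [Category.{u} C] [HasLimits C]
    [HasFiniteColimits C] (hcomm : CofilteredLimitsCommuteWithFiniteColimits.{u} C)
    (X : Profinite.{u}) (R : (Clopens X ⥤ C) ⥤ CoSheaf X C)
    (adj : ObjectProperty.ι (fun A : Clopens X ⥤ C => IsCosheaf A) ⊣ R)
    (A : Clopens X ⥤ C) (x : X) :
    IsIso (costalkMap (adj.counit.app A) x) := by
  apply isIso_of_yoneda_map_bijective
  intro c
  constructor
  · intro g₁ g₂ hg
    have hg' : g₁ ≫ costalkMap (adj.counit.app A) x = g₂ ≫ costalkMap (adj.counit.app A) x := hg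
    have h1 : skyHom ((ObjectProperty.ι
          (fun A : Clopens X ⥤ C => IsCosheaf A)).obj (R.obj A)) g₁ ≫ adj.counit.app A =
        skyHom ((ObjectProperty.ι
          (fun A : Clopens X ⥤ C => IsCosheaf A)).obj (R.obj A)) g₂ ≫ adj.counit.app A := by
      exact (skyHom_comp _ _).trans ((congrArg _ hg').trans (skyHom_comp _ _).symm)
    have h2 : (adj.homEquiv ⟨sky x c, sky_isCosheaf x c⟩ A).symm (ObjectProperty.homMk (skyHom ((ObjectProperty.ι
          (fun A : Clopens X ⥤ C => IsCosheaf A)).obj (R.obj A)) g₁)) =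
        (adj.homEquiv ⟨sky x c, sky_isCosheaf x c⟩ A).symm (ObjectProperty.homMk (skyHom ((ObjectProperty.ι
          (fun A : Clopens X ⥤ C => IsCosheaf A)).obj (R.obj A)) g₂)) := by
      erw [Adjunction.homEquiv_counit, Adjunction.homEquiv_counit]
      exact h1
    have h3 := (adj.homEquiv ⟨sky x c, sky_isCosheaf x c⟩ A).symm.injective h2
    rw [← costalkLift_skyHom ((ObjectProperty.ι
          (fun A : Clopens X ⥤ C => IsCosheaf A)).obj (R.obj A)) g₁,
      ← costalkLift_skyHom ((ObjectProperty.ι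
          (fun A : Clopens X ⥤ C => IsCosheaf A)).obj (R.obj A)) g₂]
    exact congrArg _ (congrArg InducedCategory.Hom.hom h3)
  · intro k
    refine ⟨costalkLift ((ObjectProperty.ι
        (fun A : Clopens X ⥤ C => IsCosheaf A)).obj (R.obj A))
        ((adj.homEquiv ⟨sky x c, sky_isCosheaf x c⟩ A) (skyHom A k)).hom, ?_⟩
    show costalkLift ((ObjectProperty.ι
        (fun A : Clopens X ⥤ C => IsCosheaf A)).obj (R.obj A)) _ ≫
      costalkMap (adj.counit.app A) x = k
    rw [costalkLift_comp]
    have h4 : (adj.homEquiv ⟨sky x c, sky_isCosheaf x c⟩ A).symm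
        ((adj.homEquiv ⟨sky x c, sky_isCosheaf x c⟩ A) (skyHom A k)) = skyHom A k :=
      Equiv.symm_apply_apply _ _
    erw [Adjunction.homEquiv_counit] at h4
    show costalkLift _ ((ObjectProperty.ι
        (fun A : Clopens X ⥤ C => IsCosheaf A)).map
        ((adj.homEquiv ⟨sky x c, sky_isCosheaf x c⟩ A) (skyHom A k)) ≫ adj.counit.app A) = k
    erw [h4]
    exact costalkLift_skyHom A k

end ProfiniteCosheaves
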